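/- Robust equivalence for the cost constraint: let Ω be a nonempty finite set, m a supermodular capacity on Ω with dual m'(A) = 1 − m(Ω \ A), f : Ω → ℝ, and 𝒬 a set of probability vectors on Ω such that core(m) ⊆ 𝒬 and there exists q* ∈ core(m) with E_{q*}[f] ≥ E_q[f] for every q ∈ 𝒬 (i.e., a maximizer of E_q[f] over 𝒬 lies in core(m)). Then the discrete Choquet integral with respect to the dual satisfies (C)∫ f dm' = sup_{q∈𝒬} E_q[f], and this supremum is attained. -/

import Mathlib

open Finset Filter

/-- A capacity on a finite type `Ω`: a normalized monotone set function. -/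
def IsCapacity {Ω : Type*} [Fintype Ω] (m : Finset Ω → ℝ) : Prop :=
  m ∅ = 0 ∧ m Finset.univ = 1 ∧ ∀ ⦃A B : Finset Ω⦄, A ⊆ B → m A ≤ m B

/-- The initial segment `{σ 0, …, σ (k-1)}` of an enumeration `σ` of `Ω`. -/
def prefSet {Ω : Type*} [Fintype Ω] [DecidableEq Ω]
    (σ : Fin (Fintype.card Ω) ≃ Ω) (k : ℕ) : Finset Ω :=
  (Finset.univ.filter fun j : Fin (Fintype.card Ω) => (j : ℕ) < k).image σ

/-- The Choquet sum of `f` against `m` along an enumeration `σ` of `Ω`. -/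
def choquetSum {Ω : Type*} [Fintype Ω] [DecidableEq Ω]
    (m : Finset Ω → ℝ) (f : Ω → ℝ) (σ : Fin (Fintype.card Ω) ≃ Ω) : ℝ :=
  ∑ i : Fin (Fintype.card Ω),
    f (σ i) * (m (prefSet σ ((i : ℕ) + 1)) - m (prefSet σ (i : ℕ)))

/-- An enumeration of `Ω` along which `f` is weakly decreasing. -/
noncomputable def sortedEquiv {Ω : Type*} [Fintype Ω] (f : Ω → ℝ) :
    Fin (Fintype.card Ω) ≃ Ω :=
  (Tuple.sort fun i => -f ((Fintype.equivFin Ω).symm i)).trans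
    (Fintype.equivFin Ω).symm

/-- The discrete Choquet integral of `f` with respect to `m`. -/
noncomputable def choquet {Ω : Type*} [Fintype Ω] [DecidableEq Ω]
    (m : Finset Ω → ℝ) (f : Ω → ℝ) : ℝ :=
  choquetSum m f (sortedEquiv f)

/-- The dual capacity `m'(A) = 1 - m(Ω \ A)`. -/
def dualCap {Ω : Type*} [Fintype Ω] [DecidableEq Ω]
    (m : Finset Ω → ℝ) (A : Finset Ω) : ℝ :=
  1 - m Aᶜ

/-- Supermodularity: `m(A ∪ B) + m(A ∩ B) ≥ m(A) + m(B)`. -/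
def IsSupermodular {Ω : Type*} [DecidableEq Ω] (m : Finset Ω → ℝ) : Prop :=
  ∀ A B : Finset Ω, m A + m B ≤ m (A ∪ B) + m (A ∩ B)

/-- Submodularity: `m(A ∪ B) + m(A ∩ B) ≤ m(A) + m(B)`. -/
def IsSubmodular {Ω : Type*} [DecidableEq Ω] (m : Finset Ω → ℝ) : Prop :=
  ∀ A B : Finset Ω, m (A ∪ B) + m (A ∩ B) ≤ m A + m B

/-- A probability vector on a finite type `Ω`. -/
def IsProbVector {Ω : Type*} [Fintype Ω] (P : Ω → ℝ) : Prop :=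
  (∀ ω, 0 ≤ P ω) ∧ ∑ ω, P ω = 1

/-- Membership in the core of a capacity `m`. -/
def memCore {Ω : Type*} [Fintype Ω] (m : Finset Ω → ℝ) (P : Ω → ℝ) : Prop :=
  IsProbVector P ∧ ∀ A : Finset Ω, m A ≤ ∑ ω ∈ A, P ω

/-- The λ-rule set function `m_λ(A) = (∏_{ω ∈ A} (1 + λ g(ω)) - 1) / λ`. -/
noncomputable def mLam {Ω : Type*} (lam : ℝ) (g : Ω → ℝ) (A : Finset Ω) : ℝ :=
  ((∏ ω ∈ A, (1 + lam * g ω)) - 1) / lam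
section Helpers
variable {Ω : Type*} [Fintype Ω] [DecidableEq Ω] (σ : Fin (Fintype.card Ω) ≃ Ω)

lemma mem_prefSet {k : ℕ} {ω : Ω} : ω ∈ prefSet σ k ↔ ((σ.symm ω : Fin _) : ℕ) < k := by
  simp only [prefSet, Finset.mem_image, Finset.mem_filter, Finset.mem_univ, true_and]
  constructor
  · rintro ⟨j, hj, rfl⟩; simpa using hj
  · intro h; exact ⟨σ.symm ω, h, σ.apply_symm_apply ω⟩

lemma prefSet_zero : prefSet σ 0 = ∅ := by
  ext ω; simp [mem_prefSet]

lemma prefSet_top : prefSet σ (Fintype.card Ω) = Finset.univ := by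
  ext ω; simp [mem_prefSet, (σ.symm ω).isLt]

lemma prefSet_mono {k l : ℕ} (h : k ≤ l) : prefSet σ k ⊆ prefSet σ l := by
  intro ω hω; rw [mem_prefSet] at *; omega

lemma prefSet_succ {k : ℕ} (h : k < Fintype.card Ω) :
    prefSet σ (k + 1) = insert (σ ⟨k, h⟩) (prefSet σ k) := by
  ext ω
  simp only [mem_prefSet, Finset.mem_insert]
  constructor
  · intro hlt
    rcases Nat.lt_succ_iff_lt_or_eq.mp hlt with h' | h'
    · exact Or.inr h'
    · left
      have : σ.symm ω = ⟨k, h⟩ := Fin.ext h'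
      rw [← this, σ.apply_symm_apply]
  · rintro (rfl | hω)
    · simp
    · omega

lemma not_mem_prefSet_self {k : ℕ} (h : k < Fintype.card Ω) :
    σ ⟨k, h⟩ ∉ prefSet σ k := by
  rw [mem_prefSet]; simp

end Helpers

/-- robust equivalence for the cost constraint: the dual Choquet integral
equals the attained supremum of expectations over an ambiguity set containing the core,
provided a maximizer lies in the core. -/
theorem choquet_dual_eq_sup_ambiguity {Ω : Type*} [Fintype Ω] [DecidableEq Ω] [Nonempty Ω]
    (m : Finset Ω → ℝ) (hm : IsCapacity m) (hsm : IsSupermodular m) (f : Ω → ℝ)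
    (Q : Set (Ω → ℝ)) (hQ : ∀ q ∈ Q, IsProbVector q)
    (hcore : ∀ P : Ω → ℝ, memCore m P → P ∈ Q)
    (hmax : ∃ qstar : Ω → ℝ, memCore m qstar ∧
      ∀ q ∈ Q, ∑ ω, q ω * f ω ≤ ∑ ω, qstar ω * f ω) :
    IsGreatest ((fun q : Ω → ℝ => ∑ ω, q ω * f ω) '' Q) (choquet (dualCap m) f) := by
  classical
  obtain ⟨h0, h1, hmono⟩ := hm
  set n := Fintype.card Ω with hn
  have hn0 : 0 < n := Fintype.card_pos
  set σ := sortedEquiv f with hσdef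
  set ν := dualCap m with hνdef
  have hν0 : ν ∅ = 0 := by simp [hνdef, dualCap, h1]
  have hν1 : ν Finset.univ = 1 := by simp [hνdef, dualCap, h0]
  have hνmono : ∀ {A B : Finset Ω}, A ⊆ B → ν A ≤ ν B := by
    intro A B hAB
    have := hmono (Finset.compl_subset_compl.mpr hAB)
    simp only [hνdef, dualCap]; linarith
  have hνsub : ∀ A B : Finset Ω, ν (A ∪ B) + ν (A ∩ B) ≤ ν A + ν B := by
    intro A B
    have h := hsm Aᶜ Bᶜ
    rw [← Finset.compl_inter, ← Finset.compl_union] at h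
    simp only [hνdef, dualCap]; linarith
  set σ' : ℕ → Ω := fun k => σ ⟨k % n, Nat.mod_lt k hn0⟩ with hσ'def
  have hσ'eq : ∀ (k : ℕ) (h : k < n), σ' k = σ ⟨k, h⟩ := by
    intro k h
    simp only [hσ'def]
    exact congrArg σ (Fin.ext (Nat.mod_eq_of_lt h))
  have hσ'i : ∀ i : Fin n, σ' (i : ℕ) = σ i := by
    intro i; rw [hσ'eq _ i.isLt]
  set F : ℕ → ℝ := fun k => f (σ' k) with hFdef
  set inc : ℕ → ℝ := fun k => ν (prefSet σ (k + 1)) - ν (prefSet σ k) with hincdef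
  have hinc0 : ∀ k, 0 ≤ inc k := by
    intro k
    simp only [hincdef, sub_nonneg]
    exact hνmono (prefSet_mono σ (Nat.le_succ k))
  have hsucc : ∀ k, k < n →
      prefSet σ (k + 1) = insert (σ' k) (prefSet σ k) ∧ σ' k ∉ prefSet σ k := by
    intro k h
    rw [hσ'eq k h]
    exact ⟨prefSet_succ σ h, not_mem_prefSet_self σ h⟩
  -- antitonicity of F on [0, n)
  have hanti : ∀ i j : ℕ, i ≤ j → ∀ hj : j < n, ∀ hi : i < n, F j ≤ F i := by
    intro i j hij hj hi
    have hmon := Tuple.monotone_sort (fun i : Fin n => -f ((Fintype.equivFin Ω).symm i))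
    have h1 : ∀ (k : ℕ) (hk : k < n),
        F k = -((fun i : Fin n => -f ((Fintype.equivFin Ω).symm i))
          (Tuple.sort (fun i : Fin n => -f ((Fintype.equivFin Ω).symm i)) ⟨k, hk⟩)) := by
      intro k hk
      simp only [hFdef, hσ'eq k hk, hσdef, sortedEquiv, Equiv.trans_apply, neg_neg]
      rfl
    rw [h1 i hi, h1 j hj]
    exact neg_le_neg (hmon (show (⟨i, hi⟩ : Fin n) ≤ ⟨j, hj⟩ from hij))
  -- telescoping
  have htel : ∀ k : ℕ, ∑ i ∈ Finset.range k, inc i = ν (prefSet σ k) := by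
    intro k
    simp only [hincdef]
    rw [Finset.sum_range_sub (fun j => ν (prefSet σ j)) k, prefSet_zero, hν0, sub_zero]
  -- bound lemma
  have hB : ∀ (A : Finset Ω) (k : ℕ), k ≤ n →
      ∑ i ∈ Finset.range k, (if σ' i ∈ A then inc i else 0) ≤ ν (prefSet σ k ∩ A) := by
    intro A k
    induction k with
    | zero => intro _; simp [prefSet_zero, hν0]
    | succ k ih =>
      intro hk1
      have hk : k < n := hk1
      obtain ⟨hins, hnm⟩ := hsucc k hk
      rw [Finset.sum_range_succ]
      have hik := ih (Nat.le_of_succ_le hk1)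
      by_cases hA : σ' k ∈ A
      · have hsub := hνsub (prefSet σ k) ((prefSet σ k ∩ A) ∪ {σ' k})
        have e1 : prefSet σ k ∪ ((prefSet σ k ∩ A) ∪ {σ' k}) = prefSet σ (k + 1) := by
          rw [hins]; ext x
          simp only [Finset.mem_union, Finset.mem_inter, Finset.mem_singleton,
            Finset.mem_insert]
          tauto
        have e2 : prefSet σ k ∩ ((prefSet σ k ∩ A) ∪ {σ' k}) = prefSet σ k ∩ A := by
          ext x
          simp only [Finset.mem_inter, Finset.mem_union, Finset.mem_singleton]
          constructor
          · rintro ⟨hx, (⟨_, hxA⟩ | rfl)⟩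
            · exact ⟨hx, hxA⟩
            · exact absurd hx hnm
          · rintro ⟨hx, hxA⟩; exact ⟨hx, Or.inl ⟨hx, hxA⟩⟩
        have e3 : prefSet σ (k + 1) ∩ A = (prefSet σ k ∩ A) ∪ {σ' k} := by
          rw [hins]; ext x
          simp only [Finset.mem_inter, Finset.mem_insert, Finset.mem_union,
            Finset.mem_singleton]
          constructor
          · rintro ⟨(rfl | hx), hxA⟩
            · exact Or.inr rfl
            · exact Or.inl ⟨hx, hxA⟩
          · rintro (⟨hx, hxA⟩ | rfl)
            · exact ⟨Or.inr hx, hxA⟩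
            · exact ⟨Or.inl rfl, hA⟩
        rw [e1, e2] at hsub
        rw [e3, if_pos hA]
        have hinck : inc k = ν (prefSet σ (k + 1)) - ν (prefSet σ k) := by
          simp only [hincdef]
        linarith
      · rw [if_neg hA, add_zero]
        have e4 : prefSet σ (k + 1) ∩ A = prefSet σ k ∩ A := by
          rw [hins]; ext x
          simp only [Finset.mem_inter, Finset.mem_insert]
          constructor
          · rintro ⟨(rfl | hx), hxA⟩
            · exact absurd hxA hA
            · exact ⟨hx, hxA⟩
          · rintro ⟨hx, hxA⟩; exact ⟨Or.inr hx, hxA⟩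
        rw [e4]; exact hik
  -- conversion between Ω-sums and range-sums
  have hconv : ∀ (g : Ω → ℝ) (A : Finset Ω),
      ∑ ω ∈ A, g ω = ∑ i ∈ Finset.range n, (if σ' i ∈ A then g (σ' i) else 0) := by
    intro g A
    rw [← Fin.sum_univ_eq_sum_range (fun k => if σ' k ∈ A then g (σ' k) else 0) n]
    rw [show (∑ i : Fin n, if σ' (i : ℕ) ∈ A then g (σ' (i : ℕ)) else 0)
        = ∑ i : Fin n, (fun ω => if ω ∈ A then g ω else 0) (σ i) from
      Finset.sum_congr rfl (fun i _ => by rw [hσ'i i])]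
    rw [Equiv.sum_comp σ (fun ω => if ω ∈ A then g ω else 0)]
    rw [Finset.sum_ite_mem, Finset.univ_inter]
  -- the greedy probability vector
  set P : Ω → ℝ := fun ω => inc ((σ.symm ω : Fin n) : ℕ) with hPdef
  have hPσ' : ∀ i : ℕ, i < n → P (σ' i) = inc i := by
    intro i h
    simp only [hPdef, hσ'eq i h, Equiv.symm_apply_apply]
  have hPA : ∀ A : Finset Ω,
      ∑ ω ∈ A, P ω = ∑ i ∈ Finset.range n, (if σ' i ∈ A then inc i else 0) := by
    intro A
    rw [hconv P A]
    refine Finset.sum_congr rfl (fun i hi => ?_)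
    by_cases hA : σ' i ∈ A <;> simp [hA, hPσ' i (Finset.mem_range.mp hi)]
  have hPuniv : ∑ ω, P ω = 1 := by
    rw [hPA Finset.univ]
    simp only [Finset.mem_univ, if_true]
    rw [htel n, prefSet_top, hν1]
  have hPcore : memCore m P := by
    refine ⟨⟨fun ω => hinc0 _, hPuniv⟩, ?_⟩
    intro A
    have hcompl : ∑ ω ∈ Aᶜ, P ω ≤ ν Aᶜ := by
      have h := hB Aᶜ n le_rfl
      rw [prefSet_top, Finset.univ_inter] at h
      rw [hPA Aᶜ]; exact h
    have hsplit : ∑ ω ∈ A, P ω + ∑ ω ∈ Aᶜ, P ω = 1 := by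
      rw [Finset.sum_add_sum_compl]; exact hPuniv
    have hAc : ν Aᶜ = 1 - m A := by simp [hνdef, dualCap]
    linarith
  -- expectations as range sums
  have hE : ∀ q : Ω → ℝ, ∑ ω, q ω * f ω = ∑ i ∈ Finset.range n, q (σ' i) * F i := by
    intro q
    rw [hconv (fun ω => q ω * f ω) Finset.univ]
    simp [hFdef]
  have hCh : choquet ν f = ∑ i ∈ Finset.range n, F i * inc i := by
    show choquetSum ν f σ = _
    rw [choquetSum, ← Fin.sum_univ_eq_sum_range (fun k => F k * inc k) n]
    refine Finset.sum_congr rfl (fun i _ => ?_)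
    simp only [hFdef, hincdef, hσ'i i]
  have hPE : ∑ ω, P ω * f ω = choquet ν f := by
    rw [hE P, hCh]
    refine Finset.sum_congr rfl (fun i hi => ?_)
    rw [hPσ' i (Finset.mem_range.mp hi), mul_comm]
  -- upper bound for core elements
  have hub : ∀ q : Ω → ℝ, memCore m q → ∑ ω, q ω * f ω ≤ choquet ν f := by
    rintro q ⟨⟨hq0, hq1⟩, hqc⟩
    set D : ℕ → ℝ := fun k => ν (prefSet σ k) - ∑ ω ∈ prefSet σ k, q ω with hDdef
    have hD0 : D 0 = 0 := by simp [hDdef, prefSet_zero, hν0]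
    have hDn : D n = 0 := by simp only [hDdef, hn, prefSet_top, hν1, hq1, sub_self]
    have hDpos : ∀ k, 0 ≤ D k := by
      intro k
      have ha : m (prefSet σ k)ᶜ ≤ ∑ ω ∈ (prefSet σ k)ᶜ, q ω := hqc _
      have hb : ∑ ω ∈ prefSet σ k, q ω + ∑ ω ∈ (prefSet σ k)ᶜ, q ω = 1 := by
        rw [Finset.sum_add_sum_compl]; exact hq1
      have hc : ν (prefSet σ k) = 1 - m (prefSet σ k)ᶜ := by simp [hνdef, dualCap]
      simp only [hDdef]; linarith
    have hstep : ∀ i, i < n → inc i - q (σ' i) = D (i + 1) - D i := by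
      intro i h
      obtain ⟨hins, hnm⟩ := hsucc i h
      have hs : ∑ ω ∈ prefSet σ (i + 1), q ω = q (σ' i) + ∑ ω ∈ prefSet σ i, q ω := by
        rw [hins, Finset.sum_insert hnm]
      simp only [hDdef, hincdef]
      rw [hs]; ring
    rw [hE q, hCh]
    have key : ∑ i ∈ Finset.range n, F i * inc i - ∑ i ∈ Finset.range n, q (σ' i) * F i
        = ∑ i ∈ Finset.range n, F i * (D (i + 1) - D i) := by
      rw [← Finset.sum_sub_distrib]
      refine Finset.sum_congr rfl (fun i hi => ?_)
      rw [← hstep i (Finset.mem_range.mp hi)]; ring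
    have habel : ∑ i ∈ Finset.range n, F i * (D (i + 1) - D i)
        = - ∑ i ∈ Finset.range (n - 1), (F (i + 1) - F i) * D (i + 1) := by
      have h := Finset.sum_range_by_parts F (fun j => D (j + 1) - D j) n
      simp only [smul_eq_mul, Finset.sum_range_sub (fun j => D j), hD0, hDn, sub_zero,
        mul_zero, zero_sub] at h
      exact h
    have hterm : ∀ i ∈ Finset.range (n - 1), (F (i + 1) - F i) * D (i + 1) ≤ 0 := by
      intro i hi
      have hi' : i + 1 < n := by have := Finset.mem_range.mp hi; omega
      have hF : F (i + 1) ≤ F i := hanti i (i + 1) (Nat.le_succ i) hi' (by omega)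
      exact mul_nonpos_iff.mpr (Or.inr ⟨by linarith, hDpos _⟩)
    have hsum : ∑ i ∈ Finset.range (n - 1), (F (i + 1) - F i) * D (i + 1) ≤ 0 :=
      Finset.sum_nonpos hterm
    linarith [key, habel]
  obtain ⟨qstar, hqstarcore, hqstarmax⟩ := hmax
  constructor
  · exact ⟨P, hcore P hPcore, hPE⟩
  · rintro y ⟨q, hqQ, rfl⟩
    exact le_trans (hqstarmax q hqQ) (hub qstar hqstarcore)
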